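/- arXiv:1910.05699 — 2 statements merged into one kernel-verified Lean document; each statement's English description precedes it below -/
import Mathlib

section
/- (Weyl's inequality) For any two matrices M, N ∈ ℂ^{m×n} and any index i ∈ {1,…,min(m,n)}, the i-th largest singular values satisfy |σᵢ(M) − σᵢ(N)| ≤ ‖M − N‖, where ‖·‖ denotes the spectral norm. -/
open Matrix

/-- The ℓ² norm of a vector. -/
noncomputable def l2norm {n : Type*} [Fintype n] (v : n → ℂ) : ℝ :=
  Real.sqrt (∑ i, ‖v i‖ ^ 2)

/-- The spectral (operator) norm of a matrix. -/
noncomputable def specNorm {m n : Type*} [Fintype m] [Fintype n] (M : Matrix m n ℂ) : ℝ :=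
  sSup ((fun v : n → ℂ => l2norm (M.mulVec v)) '' {v : n → ℂ | l2norm v ≤ 1})

/-- The `i`-th singular value of `M` in non-increasing order (0-indexed), defined as the
square root of the `i`-th largest eigenvalue of the Hermitian matrix `Mᴴ * M`. -/
noncomputable def singVal {m n : ℕ} (M : Matrix (Fin m) (Fin n) ℂ) (i : ℕ) : ℝ :=
  Real.sqrt
    ((((Finset.univ.val.map
        (Matrix.isHermitian_conjTranspose_mul_self M).eigenvalues).sort (· ≤ ·)).reverse.getD i 0))

section Aux
variable {n : ℕ}


lemma sorted_eq_ofFn {n : ℕ} (f : Fin n → ℝ) :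
    (Finset.univ.val.map f).sort (· ≤ ·) = List.ofFn (f ∘ Tuple.sort f) := by
  apply List.Perm.eq_of_pairwise' (Multiset.pairwise_sort _ _)
    (Monotone.sortedLE_ofFn (Tuple.monotone_sort f)).pairwise
  rw [← Multiset.coe_eq_coe, Multiset.sort_eq]
  have h1 : (List.ofFn (f ∘ Tuple.sort f) : Multiset ℝ)
      = Multiset.map f (Multiset.map (Tuple.sort f) Finset.univ.val) := by
    rw [Multiset.map_map, List.ofFn_eq_map]
    rfl
  rw [h1]
  congr 1
  have h2 := Finset.map_univ_equiv (Tuple.sort f)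
  have := congrArg Finset.val h2
  rw [Finset.map_val] at this
  exact this.symm

lemma getD_rev {n : ℕ} (f : Fin n → ℝ) (i : ℕ) (hi : i < n) :
    (((Finset.univ.val.map f).sort (· ≤ ·)).reverse.getD i 0)
      = (f ∘ Tuple.sort f) ⟨n - 1 - i, by omega⟩ := by
  rw [sorted_eq_ofFn]
  have hlen : (List.ofFn (f ∘ Tuple.sort f)).length = n := List.length_ofFn
  have hi' : i < (List.ofFn (f ∘ Tuple.sort f)).reverse.length := by
    rw [List.length_reverse]; omega
  rw [List.getD_eq_get _ _ ⟨i, hi'⟩, List.get_reverse' _ _ (by simp [hlen]; omega)]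
  simp only [List.get_eq_getElem, List.getElem_ofFn, List.length_ofFn]

lemma l2norm_eq {n : Type*} [Fintype n] (v : EuclideanSpace ℂ n) :
    l2norm (v : n → ℂ) = ‖v‖ := by
  rw [EuclideanSpace.norm_eq, l2norm]

lemma le_specNorm {m n : ℕ} (D : Matrix (Fin m) (Fin n) ℂ) (v : EuclideanSpace ℂ (Fin n))
    (hv : ‖v‖ ≤ 1) : ‖(EuclideanSpace.equiv (Fin m) ℂ).symm (D.mulVec v)‖ ≤ specNorm D := by
  set T : EuclideanSpace ℂ (Fin n) →L[ℂ] EuclideanSpace ℂ (Fin m) :=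
    LinearMap.toContinuousLinearMap (Matrix.toEuclideanLin D)
  have hT : ∀ w : EuclideanSpace ℂ (Fin n),
      (EuclideanSpace.equiv (Fin m) ℂ).symm (D.mulVec w) = T w := by
    intro w; rfl
  rw [hT]
  apply le_csSup
  · refine ⟨‖T‖, ?_⟩
    rintro x ⟨w, hw, rfl⟩
    simp only [Set.mem_setOf_eq] at hw
    have hx : l2norm (D *ᵥ w) = ‖T ((EuclideanSpace.equiv (Fin n) ℂ).symm w)‖ := by
      rw [← hT, ← l2norm_eq]; rfl
    simp only []
    rw [hx]
    calc ‖T _‖ ≤ ‖T‖ * ‖(EuclideanSpace.equiv (Fin n) ℂ).symm w‖ := T.le_opNorm _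
    _ ≤ ‖T‖ * 1 := by
        apply mul_le_mul_of_nonneg_left _ (norm_nonneg T)
        rw [← l2norm_eq]; exact hw
    _ = ‖T‖ := mul_one _
  · refine ⟨v, by simpa [Set.mem_setOf_eq, l2norm_eq] using hv, ?_⟩
    show l2norm (D *ᵥ (v : Fin n → ℂ)) = ‖T v‖
    rw [← hT, ← l2norm_eq]; rfl


lemma quad_eq {A : Matrix (Fin n) (Fin n) ℂ} (hA : A.IsHermitian) (v : EuclideanSpace ℂ (Fin n)) :
    (inner ℂ v (Matrix.toEuclideanLin A v) : ℂ).re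
      = ∑ j, hA.eigenvalues j * ‖hA.eigenvectorBasis.repr v j‖ ^ 2 := by
  set b := hA.eigenvectorBasis
  set T := Matrix.toEuclideanLin A
  have hSym : T.IsSymmetric := (Matrix.isHermitian_iff_isSymmetric).1 hA
  have hTb : ∀ j, T (b j) = (hA.eigenvalues j : ℂ) • b j := by
    intro j
    apply (WithLp.equiv 2 _).injective
    have := hA.mulVec_eigenvectorBasis j
    simpa [T, Matrix.ofLp_toEuclideanLin_apply] using this
  have hrepr : ∀ j, b.repr (T v) j = (hA.eigenvalues j : ℂ) * b.repr v j := by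
    intro j
    rw [b.repr_apply_apply, b.repr_apply_apply, ← hSym (b j) v, hTb j, inner_smul_left]
    simp
  have h1 : (inner ℂ v (T v) : ℂ) = ∑ j, (starRingEnd ℂ) (b.repr v j) * b.repr (T v) j := by
    rw [← b.repr.inner_map_map v (T v)]
    rw [PiLp.inner_apply]
    exact Finset.sum_congr rfl fun j _ => by simp [mul_comm]
  rw [h1]
  rw [Complex.re_sum]
  apply Finset.sum_congr rfl
  intro j _
  rw [hrepr j, ← mul_assoc, mul_comm ((starRingEnd ℂ) _) _, mul_assoc,
    mul_comm ((starRingEnd ℂ) _) _, Complex.mul_conj', ← Complex.ofReal_pow,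
    ← Complex.ofReal_mul, Complex.ofReal_re]

lemma norm_sq_eq_repr (b : OrthonormalBasis (Fin n) ℂ (EuclideanSpace ℂ (Fin n)))
    (v : EuclideanSpace ℂ (Fin n)) : ‖v‖ ^ 2 = ∑ j, ‖b.repr v j‖ ^ 2 := by
  rw [← b.repr.norm_map v, EuclideanSpace.norm_eq, Real.sq_sqrt]
  positivity

lemma repr_zero_of_mem_span (b : OrthonormalBasis (Fin n) ℂ (EuclideanSpace ℂ (Fin n)))
    (S : Finset (Fin n)) (v : EuclideanSpace ℂ (Fin n))
    (hv : v ∈ Submodule.span ℂ (⇑b '' (S : Set (Fin n)))) :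
    ∀ j ∉ S, b.repr v j = 0 := by
  intro j hj
  rw [b.repr_apply_apply]
  induction hv using Submodule.span_induction with
  | mem x hx =>
    obtain ⟨k, hk, rfl⟩ := hx
    exact b.orthonormal.2 (fun h => hj (h ▸ hk))
  | zero => simp
  | add x y _ _ hx hy => rw [inner_add_right, hx, hy, add_zero]
  | smul c x _ hx => rw [inner_smul_right, hx, mul_zero]

lemma finrank_span_orthonormal (b : OrthonormalBasis (Fin n) ℂ (EuclideanSpace ℂ (Fin n)))
    (S : Finset (Fin n)) :
    Module.finrank ℂ (Submodule.span ℂ (⇑b '' (S : Set (Fin n)))) = S.card := by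
  have h1 : ⇑b '' (S : Set (Fin n)) = Set.range (fun j : S => b j) := by
    ext x; simp
  rw [h1, finrank_span_eq_card]
  · simp
  · exact b.orthonormal.linearIndependent.comp _ Subtype.val_injective

lemma exists_ne_zero_mem_inf (V W : Submodule ℂ (EuclideanSpace ℂ (Fin n)))
    (h : n < Module.finrank ℂ V + Module.finrank ℂ W) :
    ∃ v ∈ V ⊓ W, v ≠ 0 := by
  have hE : Module.finrank ℂ (EuclideanSpace ℂ (Fin n)) = n := finrank_euclideanSpace_fin
  have hsup : Module.finrank ℂ ↥(V ⊔ W) ≤ n := le_trans (Submodule.finrank_le _) (le_of_eq hE)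
  have key := Submodule.finrank_sup_add_finrank_inf_eq V W
  have hpos : 0 < Module.finrank ℂ ↥(V ⊓ W) := by omega
  haveI := Module.finrank_pos_iff.1 hpos
  obtain ⟨⟨v, hv⟩, hv0⟩ := exists_ne (0 : ↥(V ⊓ W))
  exact ⟨v, hv, fun h0 => hv0 (by simp [h0, Submodule.mk_eq_zero])⟩

lemma quad_tms {m : ℕ} (M : Matrix (Fin m) (Fin n) ℂ) (v : EuclideanSpace ℂ (Fin n)) :
    (inner ℂ v (Matrix.toEuclideanLin (Mᴴ * M) v) : ℂ).re = ‖Matrix.toEuclideanLin M v‖ ^ 2 := by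
  have h : (inner ℂ v (Matrix.toEuclideanLin (Mᴴ * M) v) : ℂ)
      = inner ℂ (Matrix.toEuclideanLin M v) (Matrix.toEuclideanLin M v) := by
    rw [EuclideanSpace.inner_eq_star_dotProduct, EuclideanSpace.inner_eq_star_dotProduct]
    rw [Matrix.ofLp_toEuclideanLin_apply, Matrix.ofLp_toEuclideanLin_apply]
    rw [← Matrix.mulVec_mulVec, dotProduct_comm, Matrix.dotProduct_mulVec, ← Matrix.star_mulVec,
      dotProduct_comm]
  rw [h]
  exact inner_self_eq_norm_sq (𝕜 := ℂ) _

lemma l2norm_neg {k : Type*} [Fintype k] (v : k → ℂ) : l2norm (-v) = l2norm v := by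
  simp [l2norm]

lemma weyl_core {m n : ℕ} (M N : Matrix (Fin m) (Fin n) ℂ) (i : ℕ) (hi : i < n) :
    singVal M i ≤ singVal N i + specNorm (M - N) := by
  set hAM := Matrix.isHermitian_conjTranspose_mul_self M with hAMdef
  set hAN := Matrix.isHermitian_conjTranspose_mul_self N with hANdef
  set lM := hAM.eigenvalues
  set lN := hAN.eigenvalues
  set τM := Tuple.sort lM
  set τN := Tuple.sort lN
  set bM := hAM.eigenvectorBasis
  set bN := hAN.eigenvectorBasis
  set d : Fin n := ⟨n - 1 - i, by omega⟩ with hd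
  have hsM : singVal M i = Real.sqrt (lM (τM d)) := by
    rw [singVal, getD_rev _ _ hi]; rfl
  have hsN : singVal N i = Real.sqrt (lN (τN d)) := by
    rw [singVal, getD_rev _ _ hi]; rfl
  set SM := (Finset.Ici d).image τM with hSM
  set SN := (Finset.Iic d).image τN with hSN
  set V := Submodule.span ℂ (⇑bM '' (SM : Set (Fin n)))
  set W := Submodule.span ℂ (⇑bN '' (SN : Set (Fin n)))
  have hcard : n < Module.finrank ℂ V + Module.finrank ℂ W := by
    rw [finrank_span_orthonormal, finrank_span_orthonormal, hSM, hSN,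
      Finset.card_image_of_injective _ τM.injective,
      Finset.card_image_of_injective _ τN.injective, Fin.card_Ici, Fin.card_Iic]
    simp only [hd]
    omega
  obtain ⟨v, ⟨hvV, hvW⟩, hv0⟩ := exists_ne_zero_mem_inf V W hcard
  set u := ((‖v‖ : ℂ))⁻¹ • v with hu
  have hnu : ‖u‖ = 1 := by
    rw [hu, norm_smul, norm_inv, Complex.norm_real, Real.norm_eq_abs, abs_norm]
    exact inv_mul_cancel₀ (norm_ne_zero_iff.2 hv0)
  have huV : u ∈ V := V.smul_mem _ hvV
  have huW : u ∈ W := W.smul_mem _ hvW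
  have hnormsum : ∀ (b : OrthonormalBasis (Fin n) ℂ (EuclideanSpace ℂ (Fin n))),
      ∑ j, ‖b.repr u j‖ ^ 2 = 1 := by
    intro b; rw [← norm_sq_eq_repr, hnu]; norm_num
  -- bound 1
  have h1 : lM (τM d) ≤ ‖Matrix.toEuclideanLin M u‖ ^ 2 := by
    rw [← quad_tms, quad_eq hAM u]
    have hz := repr_zero_of_mem_span bM SM u huV
    calc lM (τM d) = ∑ j, lM (τM d) * ‖bM.repr u j‖ ^ 2 := by
          rw [← Finset.mul_sum, hnormsum bM, mul_one]
      _ ≤ ∑ j, lM j * ‖bM.repr u j‖ ^ 2 := by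
          apply Finset.sum_le_sum
          intro j _
          by_cases hj : j ∈ SM
          · apply mul_le_mul_of_nonneg_right _ (by positivity)
            obtain ⟨k, hk, rfl⟩ := Finset.mem_image.1 hj
            exact Tuple.monotone_sort lM (Finset.mem_Ici.1 hk)
          · rw [hz j hj]; simp
  -- bound 2
  have h2 : ‖Matrix.toEuclideanLin N u‖ ^ 2 ≤ lN (τN d) := by
    rw [← quad_tms, quad_eq hAN u]
    have hz := repr_zero_of_mem_span bN SN u huW
    calc ∑ j, lN j * ‖bN.repr u j‖ ^ 2 ≤ ∑ j, lN (τN d) * ‖bN.repr u j‖ ^ 2 := by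
          apply Finset.sum_le_sum
          intro j _
          by_cases hj : j ∈ SN
          · apply mul_le_mul_of_nonneg_right _ (by positivity)
            obtain ⟨k, hk, rfl⟩ := Finset.mem_image.1 hj
            exact Tuple.monotone_sort lN (Finset.mem_Iic.1 hk)
          · rw [hz j hj]; simp
      _ = lN (τN d) := by rw [← Finset.mul_sum, hnormsum bN, mul_one]
  -- combine
  have hMle : singVal M i ≤ ‖Matrix.toEuclideanLin M u‖ := by
    rw [hsM]
    calc Real.sqrt (lM (τM d)) ≤ Real.sqrt (‖Matrix.toEuclideanLin M u‖ ^ 2) :=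
          Real.sqrt_le_sqrt h1
      _ = ‖Matrix.toEuclideanLin M u‖ := Real.sqrt_sq (norm_nonneg _)
  have hNle : ‖Matrix.toEuclideanLin N u‖ ≤ singVal N i := by
    rw [hsN, ← Real.sqrt_sq (norm_nonneg (Matrix.toEuclideanLin N u))]
    exact Real.sqrt_le_sqrt h2
  have htri : ‖Matrix.toEuclideanLin M u‖
      ≤ ‖Matrix.toEuclideanLin N u‖ + ‖Matrix.toEuclideanLin (M - N) u‖ := by
    have : Matrix.toEuclideanLin M u
        = Matrix.toEuclideanLin N u + Matrix.toEuclideanLin (M - N) u := by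
      rw [map_sub]; simp
    rw [this]; exact norm_add_le _ _
  have hspec : ‖Matrix.toEuclideanLin (M - N) u‖ ≤ specNorm (M - N) := by
    have : Matrix.toEuclideanLin (M - N) u
        = (EuclideanSpace.equiv (Fin m) ℂ).symm ((M - N).mulVec u) := rfl
    rw [this]
    exact le_specNorm _ _ (le_of_eq hnu)
  linarith

end Aux

/-- Weyl's inequality for singular values. -/
theorem weyl_inequality {m n : ℕ} (M N : Matrix (Fin m) (Fin n) ℂ) (i : ℕ)
    (hi : i < min m n) :
    |singVal M i - singVal N i| ≤ specNorm (M - N) := by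
  have hin : i < n := lt_of_lt_of_le hi (min_le_right m n)
  have h1 := weyl_core M N i hin
  have h2 := weyl_core N M i hin
  have hsym : specNorm (N - M) = specNorm (M - N) := by
    rw [specNorm, specNorm]
    have : (fun v : Fin n → ℂ => l2norm ((N - M).mulVec v))
        = fun v => l2norm ((M - N).mulVec v) := by
      funext v
      have h : (N - M).mulVec v = -((M - N).mulVec v) := by
        rw [← Matrix.neg_mulVec, neg_sub]
      rw [h, l2norm_neg]
    rw [this]
  rw [hsym] at h2
  rw [abs_sub_le_iff]
  constructor <;> linarith
end

section
/- Let M, M' be m×m diagonalizable matrices with M = Q diag(λ₁,…,λ_m) Q⁻¹ and M' = Q' diag(λ'₁,…,λ'_m) Q'⁻¹. For any function f : ℂ → ℂ, ‖Ψ_f(M) − Ψ_f(M')‖_F ≤ κ₂(Q) κ₂(Q') ‖M − M'‖_F · max_{j,k} |(f(λ_j) − f(λ'_k)) / (λ_j − λ'_k)|, with the convention that the quotient is 0 when λ_j = λ'_k. -/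
open Matrix

/-- The Frobenius norm of a matrix. -/
noncomputable def frobNorm {m n : Type*} [Fintype m] [Fintype n] (M : Matrix m n ℂ) : ℝ :=
  Real.sqrt (∑ i, ∑ j, ‖M i j‖ ^ 2)

/-- The ℓ² condition number of an invertible matrix `Q`:
`κ₂(Q) = σ_max(Q)/σ_min(Q) = ‖Q‖·‖Q⁻¹‖`. -/
noncomputable def cond2 {m : Type*} [Fintype m] [DecidableEq m] (Q : Matrix m m ℂ) : ℝ :=
  specNorm Q * specNorm Q⁻¹

section Helpers

open scoped Matrix.Norms.L2Operator

variable {m n p : Type*} [Fintype m] [Fintype n] [Fintype p]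

lemma l2norm_eq_norm {n : Type*} [Fintype n] (v : EuclideanSpace ℂ n) :
    l2norm ((WithLp.equiv 2 _) v) = ‖v‖ := by
  simp [l2norm, EuclideanSpace.norm_eq]

lemma l2norm_eq_norm' (v : n → ℂ) :
    l2norm v = ‖(WithLp.equiv 2 (n → ℂ)).symm v‖ := by
  rw [← l2norm_eq_norm]; simp

lemma l2norm_nonneg (v : n → ℂ) : 0 ≤ l2norm v := Real.sqrt_nonneg _

lemma l2norm_sq (v : n → ℂ) : l2norm v ^ 2 = ∑ i, ‖v i‖ ^ 2 :=
  Real.sq_sqrt (Finset.sum_nonneg fun i _ => sq_nonneg _)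

lemma frobNorm_nonneg (M : Matrix m n ℂ) : 0 ≤ frobNorm M := Real.sqrt_nonneg _

lemma frobNorm_sq (M : Matrix m n ℂ) : frobNorm M ^ 2 = ∑ i, ∑ j, ‖M i j‖ ^ 2 :=
  Real.sq_sqrt (Finset.sum_nonneg fun i _ => Finset.sum_nonneg fun j _ => sq_nonneg _)

lemma l2norm_star (v : n → ℂ) : l2norm (star v) = l2norm v := by
  simp [l2norm]

set_option maxHeartbeats 1000000 in
lemma specNorm_eq [DecidableEq n] (A : Matrix m n ℂ) :
    specNorm A = ‖A‖ := by
  rw [l2_opNorm_def, ← ContinuousLinearMap.sSup_unitClosedBall_eq_norm]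
  unfold specNorm
  have key : ∀ x : EuclideanSpace ℂ n,
      ‖((toEuclideanLin ≪≫ₗ LinearMap.toContinuousLinearMap) A) x‖ =
        l2norm (A.mulVec ((WithLp.equiv 2 _) x)) := by
    intro x
    rw [← l2norm_eq_norm]
    congr 1
  congr 1
  ext r
  constructor
  · rintro ⟨v, hv, rfl⟩
    refine ⟨(WithLp.equiv 2 _).symm v, ?_, ?_⟩
    · rw [Metric.mem_closedBall, dist_zero_right, ← l2norm_eq_norm]
      simpa using hv
    · simp only [key]
      simp
  · rintro ⟨x, hx, rfl⟩
    refine ⟨(WithLp.equiv 2 _) x, ?_, ?_⟩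
    · rw [Set.mem_setOf_eq, l2norm_eq_norm]
      simpa using Metric.mem_closedBall.mp hx
    · exact (key x).symm

lemma specNorm_nonneg [DecidableEq n] (A : Matrix m n ℂ) : 0 ≤ specNorm A := by
  rw [specNorm_eq]; exact norm_nonneg _

lemma l2norm_mulVec_le [DecidableEq n] (A : Matrix m n ℂ) (v : n → ℂ) :
    l2norm (A.mulVec v) ≤ specNorm A * l2norm v := by
  rw [specNorm_eq, l2norm_eq_norm' (A.mulVec v), l2norm_eq_norm' v]
  exact A.l2_opNorm_mulVec ((WithLp.equiv 2 (n → ℂ)).symm v)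

lemma mulVec_map_star (B : Matrix m n ℂ) (v : n → ℂ) :
    (B.map star).mulVec v = star (B.mulVec (star v)) := by
  ext i
  simp [mulVec, dotProduct, Matrix.map_apply, mul_comm]

lemma specNorm_map_star (B : Matrix m n ℂ) : specNorm (B.map star) = specNorm B := by
  unfold specNorm
  congr 1
  ext r
  constructor
  · rintro ⟨v, hv, rfl⟩
    refine ⟨star v, by simpa [l2norm_star] using hv, ?_⟩
    show l2norm _ = l2norm _
    rw [mulVec_map_star, l2norm_star]
  · rintro ⟨v, hv, rfl⟩
    refine ⟨star v, by simpa [l2norm_star] using hv, ?_⟩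
    show l2norm _ = l2norm _
    rw [mulVec_map_star, l2norm_star, star_star]

lemma specNorm_transpose [DecidableEq m] [DecidableEq n] (A : Matrix m n ℂ) :
    specNorm Aᵀ = specNorm A := by
  have h1 : Aᵀ = Aᴴ.map star := by
    ext i j
    simp [conjTranspose_apply]
  rw [h1, specNorm_map_star, specNorm_eq, specNorm_eq, l2_opNorm_conjTranspose]

lemma frobNorm_transpose (M : Matrix m n ℂ) : frobNorm Mᵀ = frobNorm M := by
  unfold frobNorm
  rw [Finset.sum_comm]
  rfl

lemma frobNorm_mul_left [DecidableEq n] (Q : Matrix m n ℂ) (A : Matrix n p ℂ) :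
    frobNorm (Q * A) ≤ specNorm Q * frobNorm A := by
  have hs : ∑ i, ∑ j, ‖(Q * A) i j‖ ^ 2 ≤ (specNorm Q * frobNorm A) ^ 2 := by
    rw [Finset.sum_comm]
    have hcol : ∀ j, ∑ i, ‖(Q * A) i j‖ ^ 2 = l2norm (Q.mulVec fun k => A k j) ^ 2 := by
      intro j
      rw [l2norm_sq]
      refine Finset.sum_congr rfl fun i _ => ?_
      simp [mul_apply, mulVec, dotProduct]
    calc ∑ j, ∑ i, ‖(Q * A) i j‖ ^ 2
        = ∑ j, l2norm (Q.mulVec fun k => A k j) ^ 2 := Finset.sum_congr rfl fun j _ => hcol j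
      _ ≤ ∑ j, (specNorm Q * l2norm fun k => A k j) ^ 2 :=
          Finset.sum_le_sum fun j _ =>
            pow_le_pow_left₀ (l2norm_nonneg _) (l2norm_mulVec_le Q _) 2
      _ = specNorm Q ^ 2 * ∑ j, (l2norm fun k => A k j) ^ 2 := by
          simp [mul_pow, Finset.mul_sum]
      _ = (specNorm Q * frobNorm A) ^ 2 := by
          rw [mul_pow, frobNorm_sq, Finset.sum_comm]
          congr 1
          exact Finset.sum_congr rfl fun j _ => (l2norm_sq _)
  have h := Real.sqrt_le_sqrt hs
  rwa [Real.sqrt_sq (mul_nonneg (specNorm_nonneg Q) (frobNorm_nonneg A))] at h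

lemma frobNorm_mul_right [DecidableEq n] [DecidableEq p] (A : Matrix m n ℂ) (Q : Matrix n p ℂ) :
    frobNorm (A * Q) ≤ frobNorm A * specNorm Q := by
  rw [← frobNorm_transpose (A * Q), transpose_mul]
  calc frobNorm (Qᵀ * Aᵀ) ≤ specNorm Qᵀ * frobNorm Aᵀ := frobNorm_mul_left _ _
    _ = frobNorm A * specNorm Q := by rw [specNorm_transpose, frobNorm_transpose]; ring

lemma frobNorm_le_of_entry {C : ℝ} (hC : 0 ≤ C) (X E : Matrix m n ℂ)
    (h : ∀ i j, ‖X i j‖ ≤ C * ‖E i j‖) : frobNorm X ≤ C * frobNorm E := by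
  have hs : ∑ i, ∑ j, ‖X i j‖ ^ 2 ≤ C ^ 2 * ∑ i, ∑ j, ‖E i j‖ ^ 2 := by
    rw [Finset.mul_sum]
    refine Finset.sum_le_sum fun i _ => ?_
    rw [Finset.mul_sum]
    refine Finset.sum_le_sum fun j _ => ?_
    calc ‖X i j‖ ^ 2 ≤ (C * ‖E i j‖) ^ 2 := pow_le_pow_left₀ (norm_nonneg _) (h i j) 2
      _ = C ^ 2 * ‖E i j‖ ^ 2 := mul_pow _ _ _
  have h2 := Real.sqrt_le_sqrt hs
  unfold frobNorm
  rwa [Real.sqrt_mul (sq_nonneg C), Real.sqrt_sq hC] at h2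

end Helpers

/-- Bound on the difference of eigenvalue transformations of two diagonalizable matrices
`M = Q diag(λ) Q⁻¹` and `M' = Q' diag(λ') Q'⁻¹`, where
`Ψ_f(M) = Q diag(f(λ)) Q⁻¹`, and the max is over all divided differences
`|(f(λⱼ) − f(λ'ₖ))/(λⱼ − λ'ₖ)|` (taken to be `0` when `λⱼ = λ'ₖ`). -/
theorem eigen_transform_dist_le {m : ℕ}
    (M M' Q Q' : Matrix (Fin m) (Fin m) ℂ)
    (hQ : IsUnit Q.det) (hQ' : IsUnit Q'.det)
    (lam lam' : Fin m → ℂ)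
    (hM : M = Q * diagonal lam * Q⁻¹)
    (hM' : M' = Q' * diagonal lam' * Q'⁻¹)
    (f : ℂ → ℂ) :
    frobNorm (Q * diagonal (fun i => f (lam i)) * Q⁻¹ -
        Q' * diagonal (fun i => f (lam' i)) * Q'⁻¹) ≤
      cond2 Q * cond2 Q' * frobNorm (M - M') *
        sSup (Set.range fun p : Fin m × Fin m =>
          if lam p.1 = lam' p.2 then 0
          else ‖(f (lam p.1) - f (lam' p.2)) / (lam p.1 - lam' p.2)‖) := by
  set C := sSup (Set.range fun p : Fin m × Fin m =>
      if lam p.1 = lam' p.2 then 0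
      else ‖(f (lam p.1) - f (lam' p.2)) / (lam p.1 - lam' p.2)‖) with hCdef
  have hbdd : BddAbove (Set.range fun p : Fin m × Fin m =>
      if lam p.1 = lam' p.2 then 0
      else ‖(f (lam p.1) - f (lam' p.2)) / (lam p.1 - lam' p.2)‖) :=
    Set.Finite.bddAbove (Set.finite_range _)
  have hCnn : 0 ≤ C := by
    rcases isEmpty_or_nonempty (Fin m × Fin m) with h | h
    · rw [hCdef, Set.range_eq_empty, Real.sSup_empty]
    · obtain ⟨p⟩ := h
      refine le_trans ?_ (le_csSup hbdd (Set.mem_range_self p))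
      split <;> [exact le_refl 0; exact norm_nonneg _]
  have hQl : Q⁻¹ * Q = 1 := nonsing_inv_mul Q hQ
  have hQr : Q * Q⁻¹ = 1 := mul_nonsing_inv Q hQ
  have hQ'l : Q'⁻¹ * Q' = 1 := nonsing_inv_mul Q' hQ'
  have hQ'r : Q' * Q'⁻¹ = 1 := mul_nonsing_inv Q' hQ'
  set G := Q⁻¹ * Q' with hG
  set X := diagonal (fun i => f (lam i)) * G - G * diagonal (fun i => f (lam' i)) with hX
  set E := diagonal lam * G - G * diagonal lam' with hE
  have hkey : Q * diagonal (fun i => f (lam i)) * Q⁻¹ -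
      Q' * diagonal (fun i => f (lam' i)) * Q'⁻¹ = Q * X * Q'⁻¹ := by
    have h1 : Q * X * Q'⁻¹ =
        Q * diagonal (fun i => f (lam i)) * Q⁻¹ * (Q' * Q'⁻¹) -
          Q * Q⁻¹ * (Q' * diagonal (fun i => f (lam' i)) * Q'⁻¹) := by
      rw [hX, hG]; noncomm_ring
    rw [h1, hQr, hQ'r, mul_one, one_mul]
  have hE2 : E = Q⁻¹ * (M - M') * Q' := by
    rw [hM, hM']
    have h2 : Q⁻¹ * (Q * diagonal lam * Q⁻¹ - Q' * diagonal lam' * Q'⁻¹) * Q' =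
        Q⁻¹ * Q * diagonal lam * (Q⁻¹ * Q') -
          Q⁻¹ * Q' * (diagonal lam' * (Q'⁻¹ * Q')) := by
      noncomm_ring
    rw [h2, hQl, hQ'l, one_mul, mul_one, hE, hG]
  have hXE : ∀ j k, ‖X j k‖ ≤ C * ‖E j k‖ := by
    intro j k
    have hx : X j k = (f (lam j) - f (lam' k)) * G j k := by
      rw [hX]
      simp [Matrix.sub_apply, diagonal_mul, mul_diagonal]
      ring
    have he : E j k = (lam j - lam' k) * G j k := by
      rw [hE]
      simp [Matrix.sub_apply, diagonal_mul, mul_diagonal]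
      ring
    by_cases hjk : lam j = lam' k
    · have hx0 : X j k = 0 := by rw [hx, hjk]; ring
      rw [hx0, norm_zero]
      exact mul_nonneg hCnn (norm_nonneg _)
    · have hdd : ‖(f (lam j) - f (lam' k)) / (lam j - lam' k)‖ ≤ C := by
        have h := le_csSup hbdd (Set.mem_range_self ((j, k) : Fin m × Fin m))
        rw [hCdef]
        simpa [hjk] using h
      have hb : lam j - lam' k ≠ 0 := sub_ne_zero.mpr hjk
      have hfac : X j k = ((f (lam j) - f (lam' k)) / (lam j - lam' k)) * E j k := by
        rw [hx, he]
        field_simp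
      rw [hfac, norm_mul]
      exact mul_le_mul_of_nonneg_right hdd (norm_nonneg _)
  have hXf : frobNorm X ≤ C * frobNorm E := frobNorm_le_of_entry hCnn X E hXE
  have hEf : frobNorm E ≤ specNorm Q⁻¹ * (frobNorm (M - M') * specNorm Q') := by
    rw [hE2]
    calc frobNorm (Q⁻¹ * (M - M') * Q')
        ≤ frobNorm (Q⁻¹ * (M - M')) * specNorm Q' := frobNorm_mul_right _ _
      _ ≤ specNorm Q⁻¹ * frobNorm (M - M') * specNorm Q' :=
          mul_le_mul_of_nonneg_right (frobNorm_mul_left _ _) (specNorm_nonneg _)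
      _ = _ := by ring
  have hXle : frobNorm X ≤ C * (specNorm Q⁻¹ * (frobNorm (M - M') * specNorm Q')) :=
    hXf.trans (mul_le_mul_of_nonneg_left hEf hCnn)
  rw [hkey]
  calc frobNorm (Q * X * Q'⁻¹)
      ≤ frobNorm (Q * X) * specNorm Q'⁻¹ := frobNorm_mul_right _ _
    _ ≤ specNorm Q * frobNorm X * specNorm Q'⁻¹ :=
        mul_le_mul_of_nonneg_right (frobNorm_mul_left _ _) (specNorm_nonneg _)
    _ ≤ specNorm Q * (C * (specNorm Q⁻¹ * (frobNorm (M - M') * specNorm Q'))) * specNorm Q'⁻¹ := by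
        refine mul_le_mul_of_nonneg_right ?_ (specNorm_nonneg _)
        exact mul_le_mul_of_nonneg_left hXle (specNorm_nonneg _)
    _ = cond2 Q * cond2 Q' * frobNorm (M - M') * C := by
        unfold cond2; ring
end
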